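/- Assume Assumptions (a) and (b) and let p_0 ∈ ℝ^{Z_m} be a maximizer of Ξ(p) := Ξ_μ(p) + Ξ_ν(−p). For each z ∈ Z_m let ζ(z) ∈ Z be a minimizer of ζ ↦ ∫_{A_z(p_0)} c¹(x,ζ) dμ(x) + ∫_{B_z(−p_0)} c²(ζ,y) dν(y), and let Z_m^{new} := {ζ(z) : z ∈ Z_m}. Then c^{Z_m^{new}}(μ,ν) ≤ c^{Z_m}(μ,ν). -/

import Mathlib

open MeasureTheory

/-- Kantorovich optimal transport cost between `μ` and `ν` for the cost `c`. -/
noncomputable def kant {X Y : Type*} [MeasurableSpace X] [MeasurableSpace Y]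
    (μ : Measure X) (ν : Measure Y) (c : X → Y → ℝ) : ℝ :=
  sInf {t : ℝ | ∃ π : Measure (X × Y), IsProbabilityMeasure π ∧
    π.map Prod.fst = μ ∧ π.map Prod.snd = ν ∧ t = ∫ q, c q.1 q.2 ∂π}

open scoped ENNReal

section Aux
variable {α : Type*} [MeasurableSpace α] {μ : Measure α}

lemma integrable_of_bdd [IsFiniteMeasure μ] {h : α → ℝ} (hm : AEStronglyMeasurable h μ)
    {C : ℝ} (hC : ∀ x, |h x| ≤ C) : Integrable h μ :=
  (integrable_const C).mono' hm (Filter.Eventually.of_forall fun x => by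
    simpa [Real.norm_eq_abs] using hC x)

lemma abs_ciInf_le {ι : Type*} [Fintype ι] [Nonempty ι] (g : ι → ℝ) (M : ℝ)
    (h : ∀ u, |g u| ≤ M) : |⨅ u, g u| ≤ M := by
  obtain ⟨u0, hu0⟩ := exists_eq_ciInf_of_finite (f := g)
  rw [abs_le]
  constructor
  · exact le_ciInf fun u => (abs_le.1 (h u)).1
  · rw [← hu0]; exact (abs_le.1 (h u0)).2

lemma bdd_range {ι : Type*} [Finite ι] (g : ι → ℝ) : BddBelow (Set.range g) :=
  (Set.finite_range g).bddBelow

lemma exists_abs_bound {ι : Type*} [Fintype ι] [Nonempty ι] (p : ι → ℝ) :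
    ∃ C, ∀ u, |p u| ≤ C := by
  obtain ⟨u0, hu0⟩ := Finite.exists_max fun u => |p u|
  exact ⟨|p u0|, hu0⟩

end Aux

section Balance

variable {X Y : Type*} [MeasurableSpace X] [MeasurableSpace Y]
  {μ : Measure X} {ν : Measure Y} [IsProbabilityMeasure μ] [IsProbabilityMeasure ν]
  {ι : Type*} [Fintype ι] [Nonempty ι]

/-- One-sided balance: the mass of the `z`-cell of `f` is at most that of the `z`-cell of `g`. -/
lemma balance (f : X → ι → ℝ) (g : Y → ι → ℝ)
    (hf : ∀ u, Measurable fun x => f x u) (hg : ∀ u, Measurable fun y => g y u)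
    (Mf : ℝ) (hMf : ∀ x u, |f x u| ≤ Mf) (Mg : ℝ) (hMg : ∀ y u, |g y u| ≤ Mg)
    (hlevel : ∀ (t : ℝ) (u u' : ι), u ≠ u' → μ {x | f x u - f x u' = t} = 0)
    (p : ι → ℝ)
    (hmax : ∀ q : ι → ℝ,
      (∫ x, (⨅ u, f x u + q u) ∂μ) + (∫ y, (⨅ u, g y u - q u) ∂ν)
        ≤ (∫ x, (⨅ u, f x u + p u) ∂μ) + (∫ y, (⨅ u, g y u - p u) ∂ν))
    (z : ι) :
    μ {x | f x z + p z = ⨅ u, f x u + p u} ≤ ν {y | g y z - p z = ⨅ u, g y u - p u} := by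
  classical
  obtain ⟨Cp, hCp⟩ := exists_abs_bound p
  -- basic objects
  set ξf : (ι → ℝ) → X → ℝ := fun q x => ⨅ u, f x u + q u with hξf
  set ξg : (ι → ℝ) → Y → ℝ := fun q y => ⨅ u, g y u - q u with hξg
  have mξf : ∀ q, Measurable (ξf q) := fun q => Measurable.iInf fun u => (hf u).add_const _
  have mξg : ∀ q, Measurable (ξg q) := fun q => Measurable.iInf fun u => (hg u).sub_const _
  have intξf : ∀ (q : ι → ℝ) (C : ℝ), (∀ u, |q u| ≤ C) → Integrable (ξf q) μ := by
    intro q C hC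
    refine integrable_of_bdd (mξf q).aestronglyMeasurable (C := Mf + C) fun x => ?_
    exact abs_ciInf_le _ _ fun u => (abs_add_le _ _).trans (add_le_add (hMf x u) (hC u))
  have intξg : ∀ (q : ι → ℝ) (C : ℝ), (∀ u, |q u| ≤ C) → Integrable (ξg q) ν := by
    intro q C hC
    refine integrable_of_bdd (mξg q).aestronglyMeasurable (C := Mg + C) fun y => ?_
    refine abs_ciInf_le _ _ fun u => ?_
    rw [sub_eq_add_neg]
    exact (abs_add_le _ _).trans (add_le_add (hMg y u) (by simpa using hC u))
  -- the perturbed sets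
  set E : ℝ → Set X := fun t => {x | ∀ u, u ≠ z → f x z + p z + t ≤ f x u + p u} with hE
  set C : ℝ → Set Y := fun t => {y | g y z - p z ≤ ξg p y + t} with hC
  have mE : ∀ t, MeasurableSet (E t) := by
    intro t
    have : E t = ⋂ u, {x | u ≠ z → f x z + p z + t ≤ f x u + p u} := by
      ext x; simp [hE, Set.mem_iInter]
    rw [this]
    refine MeasurableSet.iInter fun u => ?_
    by_cases hu : u = z
    · simp [hu]
    · have : {x | u ≠ z → f x z + p z + t ≤ f x u + p u}
          = {x | f x z + p z + t ≤ f x u + p u} := by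
        ext x; simp [hu]
      rw [this]
      exact measurableSet_le (((hf z).add_const _).add_const _) ((hf u).add_const _)
  have mC : ∀ t, MeasurableSet (C t) := fun t =>
    measurableSet_le ((hg z).sub_const _) ((mξg p).add_const _)
  -- the key inequality for t > 0
  have key : ∀ t : ℝ, 0 < t → μ (E t) ≤ ν (C t) := by
    intro t ht
    set q : ι → ℝ := fun u => if u = z then p z + t else p u with hq
    have hqz : q z = p z + t := by simp [hq]
    have hqne : ∀ u, u ≠ z → q u = p u := fun u hu => by simp [hq, hu]
    have hqb : ∀ u, |q u| ≤ Cp + t := by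
      intro u
      by_cases hu : u = z
      · rw [hu, hqz]
        exact (abs_add_le _ _).trans (add_le_add (hCp z) (by rw [abs_of_pos ht]))
      · rw [hqne u hu]; exact (hCp u).trans (by linarith)
    -- pointwise: ξf p + t·1_E ≤ ξf q
    have pw1 : ∀ x, ξf p x + (E t).indicator (fun _ => t) x ≤ ξf q x := by
      intro x
      by_cases hx : x ∈ E t
      · rw [Set.indicator_of_mem hx]
        have h1 : ξf p x = f x z + p z := by
          refine le_antisymm (ciInf_le (bdd_range _) z) (le_ciInf fun u => ?_)
          by_cases hu : u = z
          · rw [hu]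
          · have := hx u hu; linarith
        rw [h1]
        refine le_ciInf fun u => ?_
        by_cases hu : u = z
        · rw [hu, hqz]; linarith
        · rw [hqne u hu]; exact hx u hu
      · rw [Set.indicator_of_notMem hx, add_zero]
        refine le_ciInf fun u => (ciInf_le (bdd_range _) u).trans ?_
        by_cases hu : u = z
        · rw [hu, hqz]; linarith
        · rw [hqne u hu]
    -- pointwise: ξg p - t·1_C ≤ ξg q
    have pw2 : ∀ y, ξg p y - (C t).indicator (fun _ => t) y ≤ ξg q y := by
      intro y
      have h2 : ∀ u, ξg p y ≤ g y u - p u := fun u => ciInf_le (bdd_range _) u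
      by_cases hy : y ∈ C t
      · rw [Set.indicator_of_mem hy]
        refine le_ciInf fun u => ?_
        by_cases hu : u = z
        · rw [hu, hqz]; have := h2 z; linarith
        · rw [hqne u hu]; have := h2 u; linarith
      · rw [Set.indicator_of_notMem hy, sub_zero]
        have hy' : ξg p y + t < g y z - p z := by
          have : ¬ (g y z - p z ≤ ξg p y + t) := hy
          linarith [lt_of_not_ge this]
        refine le_ciInf fun u => ?_
        by_cases hu : u = z
        · rw [hu, hqz]; linarith
        · rw [hqne u hu]; exact h2 u
    -- integrate
    have hindE : Integrable ((E t).indicator (fun _ => t)) μ :=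
      (integrable_const t).indicator (mE t)
    have hindC : Integrable ((C t).indicator (fun _ => t)) ν :=
      (integrable_const t).indicator (mC t)
    have i1 : (∫ x, ξf p x ∂μ) + t * (μ (E t)).toReal ≤ ∫ x, ξf q x ∂μ := by
      have h := integral_mono (f := fun x => ξf p x + (E t).indicator (fun _ => t) x)
        (g := ξf q) ((intξf p Cp hCp).add hindE) (intξf q _ hqb) pw1
      rwa [integral_add (intξf p Cp hCp) hindE, integral_indicator_const _ (mE t),
        smul_eq_mul, mul_comm] at h
    have i2 : (∫ y, ξg p y ∂ν) - t * (ν (C t)).toReal ≤ ∫ y, ξg q y ∂ν := by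
      have h := integral_mono (f := fun y => ξg p y - (C t).indicator (fun _ => t) y)
        (g := ξg q) ((intξg p Cp hCp).sub hindC) (intξg q _ hqb) pw2
      rwa [integral_sub (intξg p Cp hCp) hindC, integral_indicator_const _ (mC t),
        smul_eq_mul, mul_comm] at h
    have hM := hmax q
    have hmu : t * (μ (E t)).toReal ≤ t * (ν (C t)).toReal := by
      simp only [hξf, hξg] at i1 i2 hM
      linarith
    have hle := le_of_mul_le_mul_left hmu ht
    exact (ENNReal.toReal_le_toReal (measure_ne_top μ _) (measure_ne_top ν _)).mp hle
  -- limit step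
  set A := {x | f x z + p z = ⨅ u, f x u + p u} with hA
  set B := {y | g y z - p z = ⨅ u, g y u - p u} with hB
  set Ao := {x | ∀ u, u ≠ z → f x z + p z < f x u + p u} with hAo
  set En : ℕ → Set X := fun n => E (1/(n+1)) with hEn
  set Cn : ℕ → Set Y := fun n => C (1/(n+1)) with hCn
  have htn : ∀ n : ℕ, (0:ℝ) < 1/(n+1) := fun n => by positivity
  have hinv : ∀ {n m : ℕ}, n ≤ m → (1:ℝ)/(m+1) ≤ 1/(n+1) := by
    intro n m h
    apply one_div_le_one_div_of_le (by positivity)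
    have : (n:ℝ) ≤ m := Nat.cast_le.mpr h
    linarith
  have hmonoE : Monotone En := by
    intro n m h x hx u hu
    have := hx u hu
    have := hinv h
    linarith
  have hantiC : Antitone Cn := by
    intro n m h y hy
    have : g y z - p z ≤ ξg p y + 1/(m+1) := hy
    have := hinv h
    simp only [hCn, hC, Set.mem_setOf_eq] at *
    linarith
  -- μ A = μ Ao (up to null) and Ao ⊆ ⋃ En
  have hAoA : Ao ⊆ A := by
    intro x hx
    refine le_antisymm (le_ciInf fun u => ?_) (ciInf_le (bdd_range _) z)
    by_cases hu : u = z
    · rw [hu]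
    · exact (hx u hu).le
  have hnull : μ (A \ Ao) = 0 := by
    refine measure_mono_null (t := ⋃ u, {x | u ≠ z ∧ f x z - f x u = p u - p z}) ?_
      (measure_iUnion_null fun u => ?_)
    · rintro x ⟨hx1, hx2⟩
      simp only [hAo, Set.mem_setOf_eq, not_forall] at hx2
      obtain ⟨u, hu, hle⟩ := hx2
      push_neg at hle
      have h1 : f x z + p z ≤ f x u + p u := by
        have : ξf p x ≤ f x u + p u := ciInf_le (bdd_range _) u
        rw [hξf] at this
        simp only [hA, Set.mem_setOf_eq] at hx1
        linarith
      exact Set.mem_iUnion.2 ⟨u, hu, by linarith⟩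
    · by_cases hu : u = z
      · have he : {x | u ≠ z ∧ f x z - f x u = p u - p z} = ∅ := by
          ext x; simp [hu]
        rw [he]; exact measure_empty
      · refine measure_mono_null (t := {x | f x z - f x u = p u - p z}) ?_
          (hlevel _ z u (Ne.symm hu))
        intro x hx; exact hx.2
  have hAsub : Ao ⊆ ⋃ n, En n := by
    intro x hx
    classical
    set T : Finset ι := Finset.univ.filter (fun u => u ≠ z) with hT
    rcases T.eq_empty_or_nonempty with hTe | hTne
    · refine Set.mem_iUnion.2 ⟨0, fun u hu => ?_⟩
      exfalso
      have huT : u ∈ T := by simp [hT, hu]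
      rw [hTe] at huT
      exact Finset.notMem_empty u huT
    · obtain ⟨u0, hu0T, hmin⟩ := T.exists_min_image
        (fun u => f x u + p u - (f x z + p z)) hTne
      have hu0 : u0 ≠ z := by simpa [hT] using hu0T
      have hδ : 0 < f x u0 + p u0 - (f x z + p z) := by
        have := hx u0 hu0; linarith
      obtain ⟨n, hn⟩ := exists_nat_one_div_lt hδ
      refine Set.mem_iUnion.2 ⟨n, fun u hu => ?_⟩
      have huT : u ∈ T := by simp [hT, hu]
      have := hmin u huT
      linarith
  have hCB : (⋂ n, Cn n) ⊆ B := by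
    intro y hy
    have h2 : ξg p y ≤ g y z - p z := ciInf_le (bdd_range _) z
    have h3 : g y z - p z ≤ ξg p y := by
      by_contra hlt
      push_neg at hlt
      obtain ⟨n, hn⟩ := exists_nat_one_div_lt (sub_pos.2 hlt)
      have := Set.mem_iInter.1 hy n
      simp only [hCn, hC, Set.mem_setOf_eq] at this
      linarith
    simp only [hB, Set.mem_setOf_eq, hξg] at *
    linarith
  -- put it together
  have hμAo : μ Ao = ⨆ n, μ (En n) := by
    rw [← hmonoE.directed_le.measure_iUnion]
    exact le_antisymm (measure_mono hAsub)
      (measure_mono (Set.iUnion_subset fun n x hx u hu => by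
        have := hx u hu; have := htn n; linarith))
  have hfinal : ∀ n, μ (En n) ≤ ν B := by
    intro n
    refine le_trans ?_ (measure_mono hCB)
    rw [hantiC.measure_iInter (fun n => (mC _).nullMeasurableSet) ⟨0, measure_ne_top ν _⟩]
    refine le_iInf fun m => ?_
    calc μ (En n) ≤ μ (En (max n m)) := measure_mono (hmonoE (le_max_left n m))
      _ ≤ ν (Cn (max n m)) := key _ (htn _)
      _ ≤ ν (Cn m) := measure_mono (hantiC (le_max_right n m))
  have hAle : μ A ≤ μ Ao := by
    calc μ A ≤ μ (Ao ∪ (A \ Ao)) := measure_mono (fun x hx => by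
          by_cases h : x ∈ Ao
          · exact Or.inl h
          · exact Or.inr ⟨hx, h⟩)
      _ ≤ μ Ao + μ (A \ Ao) := measure_union_le _ _
      _ = μ Ao := by rw [hnull, add_zero]
  calc μ A ≤ μ Ao := hAle
    _ = ⨆ n, μ (En n) := hμAo
    _ ≤ ν B := iSup_le hfinal

end Balance

lemma measure_eq_of_diff_null {α : Type*} [MeasurableSpace α] {μ : Measure α} {s t : Set α}
    (hst : s ⊆ t) (h : μ (t \ s) = 0) : μ t = μ s := by
  refine le_antisymm ?_ (measure_mono hst)
  calc μ t ≤ μ (s ∪ (t \ s)) := measure_mono (fun x hx => by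
        by_cases hxs : x ∈ s
        · exact Or.inl hxs
        · exact Or.inr ⟨hx, hxs⟩)
    _ ≤ μ s + μ (t \ s) := measure_union_le _ _
    _ = μ s := by rw [h, add_zero]

lemma ennreal_helper1 {a b : ℝ≥0∞} (ha : a ≠ ⊤) (hba : b ≤ a) : a⁻¹ * (b * a) = b := by
  rcases eq_or_ne a 0 with h0 | h0
  · have : b = 0 := le_antisymm (h0 ▸ hba) bot_le
    simp [this]
  · rw [mul_comm b a, ← mul_assoc, ENNReal.inv_mul_cancel h0 ha, one_mul]

lemma ennreal_helper2 {a b : ℝ≥0∞} (ha : a ≠ ⊤) (hba : b ≤ a) : a⁻¹ * (a * b) = b := by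
  rw [mul_comm a b]; exact ennreal_helper1 ha hba


/-- under Assumptions (a) and (b), if `p₀` maximizes
`Ξ(p) = Ξ_μ(p) + Ξ_ν(−p)` and each `ζ(z)` minimizes
`ζ ↦ ∫_{A_z(p₀)} c¹(x,ζ) dμ + ∫_{B_z(−p₀)} c²(ζ,y) dν`, then the new center set
improves the cost: `c^{Z_m^{new}}(μ,ν) ≤ c^{Z_m}(μ,ν)`. -/
theorem stmt_12
    {X Y Z : Type*} [TopologicalSpace X] [PolishSpace X] [MeasurableSpace X] [BorelSpace X]
    [TopologicalSpace Y] [PolishSpace Y] [MeasurableSpace Y] [BorelSpace Y]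
    [MetricSpace Z] [CompactSpace Z]
    (μ : Measure X) (ν : Measure Y) [IsProbabilityMeasure μ] [IsProbabilityMeasure ν]
    (c1 : X → Z → ℝ) (c2 : Z → Y → ℝ)
    (hc1 : Continuous fun q : X × Z => c1 q.1 q.2) (hb1 : ∃ M, ∀ x w, |c1 x w| ≤ M)
    (hc2 : Continuous fun q : Z × Y => c2 q.1 q.2) (hb2 : ∃ M, ∀ w y, |c2 w y| ≤ M)
    (Zm : Finset Z) (hZm : Zm.Nonempty)
    (hatomlessX : ∀ x : X, μ {x} = 0)
    (hlevelX : ∀ (t : ℝ) (z z' : Zm), z ≠ z' → μ {x | c1 x z - c1 x z' = t} = 0)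
    (hatomlessY : ∀ y : Y, ν {y} = 0)
    (hlevelY : ∀ (t : ℝ) (z z' : Zm), z ≠ z' → ν {y | c2 z y - c2 z' y = t} = 0)
    (p0 : Zm → ℝ)
    (hp0 : ∀ p : Zm → ℝ,
      (∫ x, (⨅ z : Zm, c1 x z + p z) ∂μ) + (∫ y, (⨅ z : Zm, c2 z y + (-p) z) ∂ν)
        ≤ (∫ x, (⨅ z : Zm, c1 x z + p0 z) ∂μ) + ∫ y, (⨅ z : Zm, c2 z y + (-p0) z) ∂ν)
    (ζ : Zm → Z)
    (hζ : ∀ z : Zm, ∀ w : Z,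
      (∫ x in {x : X | c1 x z + p0 z = ⨅ u : Zm, (c1 x u + p0 u)}, c1 x (ζ z) ∂μ)
        + (∫ y in {y : Y | c2 z y + (-p0) z = ⨅ u : Zm, (c2 u y + (-p0) u)}, c2 (ζ z) y ∂ν)
      ≤ (∫ x in {x : X | c1 x z + p0 z = ⨅ u : Zm, (c1 x u + p0 u)}, c1 x w ∂μ)
        + ∫ y in {y : Y | c2 z y + (-p0) z = ⨅ u : Zm, (c2 u y + (-p0) u)}, c2 w y ∂ν) :
    kant μ ν (fun x y => ⨅ z : Zm, (c1 x (ζ z) + c2 (ζ z) y))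
      ≤ kant μ ν (fun x y => ⨅ z : Zm, (c1 x z + c2 z y)) := by
  classical
  haveI hnemp : Nonempty ↥Zm := hZm.to_subtype
  obtain ⟨M1, hM1⟩ := hb1
  obtain ⟨M2, hM2⟩ := hb2
  obtain ⟨Cp, hCp⟩ := exists_abs_bound p0
  -- measurability of slices
  have hfm : ∀ w : Z, Measurable fun x => c1 x w := fun w =>
    (hc1.comp (continuous_id.prodMk continuous_const)).measurable
  have hgm : ∀ w : Z, Measurable fun y => c2 w y := fun w =>
    (hc2.comp (continuous_const.prodMk continuous_id)).measurable
  have heq0 : ∀ z : Zm, μ {x : X | c1 x z + p0 z = ⨅ u : Zm, (c1 x u + p0 u)}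
      = ν {y : Y | c2 z y + (-p0) z = ⨅ u : Zm, (c2 u y + (-p0) u)} := by
    intro z
    have hmax1 : ∀ q : Zm → ℝ,
        (∫ x, (⨅ u : Zm, c1 x u + q u) ∂μ) + (∫ y, (⨅ u : Zm, c2 u y - q u) ∂ν)
          ≤ (∫ x, (⨅ u : Zm, c1 x u + p0 u) ∂μ) + ∫ y, (⨅ u : Zm, c2 u y - p0 u) ∂ν := by
      intro q
      have h := hp0 q
      simp only [Pi.neg_apply] at h
      simpa only [sub_eq_add_neg] using h
    have hmax2 : ∀ q : Zm → ℝ,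
        (∫ y, (⨅ u : Zm, c2 u y + q u) ∂ν) + (∫ x, (⨅ u : Zm, c1 x u - q u) ∂μ)
          ≤ (∫ y, (⨅ u : Zm, c2 u y + (-p0) u) ∂ν)
            + ∫ x, (⨅ u : Zm, c1 x u - (-p0) u) ∂μ := by
      intro q
      have h := hp0 (-q)
      simp only [Pi.neg_apply, neg_neg] at h
      simp only [Pi.neg_apply, sub_eq_add_neg, neg_neg]
      linarith
    have b1 : μ {x : X | c1 x z + p0 z = ⨅ u : Zm, (c1 x u + p0 u)}
        ≤ ν {y : Y | c2 z y - p0 z = ⨅ u : Zm, (c2 u y - p0 u)} :=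
      balance (μ := μ) (ν := ν) (fun x (u : Zm) => c1 x u) (fun y (u : Zm) => c2 u y)
        (fun u => hfm u) (fun u => hgm u) M1 (fun x u => hM1 x u) M2 (fun y u => hM2 u y)
        (fun t u u' h => hlevelX t u u' h) p0 hmax1 z
    have b2 : ν {y : Y | c2 z y + (-p0) z = ⨅ u : Zm, (c2 u y + (-p0) u)}
        ≤ μ {x : X | c1 x z - (-p0) z = ⨅ u : Zm, (c1 x u - (-p0) u)} :=
      balance (μ := ν) (ν := μ) (fun y (u : Zm) => c2 u y) (fun x (u : Zm) => c1 x u)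
        (fun u => hgm u) (fun u => hfm u) M2 (fun y u => hM2 u y) M1 (fun x u => hM1 x u)
        (fun t u u' h => hlevelY t u u' h) (-p0) hmax2 z
    have hsB : {y : Y | c2 z y - p0 z = ⨅ u : Zm, (c2 u y - p0 u)}
        = {y : Y | c2 z y + (-p0) z = ⨅ u : Zm, (c2 u y + (-p0) u)} := by
      ext y; simp only [Set.mem_setOf_eq, sub_eq_add_neg, Pi.neg_apply]
    have hsA : {x : X | c1 x z - (-p0) z = ⨅ u : Zm, (c1 x u - (-p0) u)}
        = {x : X | c1 x z + p0 z = ⨅ u : Zm, (c1 x u + p0 u)} := by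
      ext x; simp only [Set.mem_setOf_eq, Pi.neg_apply, sub_neg_eq_add]
    rw [hsB] at b1
    rw [hsA] at b2
    exact le_antisymm b1 b2
  -- potentials
  set ξ1 : X → ℝ := fun x => ⨅ u : Zm, (c1 x u + p0 u) with hξ1
  set ξ2 : Y → ℝ := fun y => ⨅ u : Zm, (c2 u y + (-p0) u) with hξ2
  have mξ1 : Measurable ξ1 := Measurable.iInf fun u => (hfm u).add_const _
  have mξ2 : Measurable ξ2 := Measurable.iInf fun u => (hgm u).add_const _
  have hnegp : ∀ u : Zm, (-p0) u = -(p0 u) := fun u => rfl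
  have bξ1 : ∀ x, |ξ1 x| ≤ M1 + Cp := fun x =>
    abs_ciInf_le _ _ fun u => (abs_add_le _ _).trans (add_le_add (hM1 x u) (hCp u))
  have bξ2 : ∀ y, |ξ2 y| ≤ M2 + Cp := fun y =>
    abs_ciInf_le _ _ fun u => (abs_add_le _ _).trans (add_le_add (hM2 u y)
      (by rw [hnegp, abs_neg]; exact hCp u))
  have intξ1 : Integrable ξ1 μ := integrable_of_bdd mξ1.aestronglyMeasurable bξ1
  have intξ2 : Integrable ξ2 ν := integrable_of_bdd mξ2.aestronglyMeasurable bξ2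
  -- cells
  set A : Zm → Set X := fun z => {x : X | c1 x z + p0 z = ⨅ u : Zm, (c1 x u + p0 u)} with hA
  set B : Zm → Set Y := fun z => {y : Y | c2 z y + (-p0) z = ⨅ u : Zm, (c2 u y + (-p0) u)} with hB
  have mA : ∀ z, MeasurableSet (A z) := fun z =>
    measurableSet_eq_fun ((hfm z).add_const _) mξ1
  have mB : ∀ z, MeasurableSet (B z) := fun z =>
    measurableSet_eq_fun ((hgm z).add_const _) mξ2
  -- balance : μ (A z) = ν (B z)
  have heq : ∀ z, μ (A z) = ν (B z) := fun z => heq0 z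
  -- overlaps are null
  have hAA : ∀ z u : Zm, z ≠ u → μ (A z ∩ A u) = 0 := by
    intro z u hzu
    refine measure_mono_null ?_ (hlevelX (p0 u - p0 z) z u hzu)
    rintro x ⟨hx1, hx2⟩
    simp only [hA, Set.mem_setOf_eq] at hx1 hx2
    show c1 x ↑z - c1 x ↑u = p0 u - p0 z
    linarith
  have hBB : ∀ z u : Zm, z ≠ u → ν (B z ∩ B u) = 0 := by
    intro z u hzu
    refine measure_mono_null ?_ (hlevelY (p0 z - p0 u) z u hzu)
    rintro y ⟨hy1, hy2⟩
    simp only [hB, Set.mem_setOf_eq, Pi.neg_apply] at hy1 hy2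
    show c2 ↑z y - c2 ↑u y = p0 z - p0 u
    linarith
  -- disjointified cells
  set e := Fintype.equivFin ↥Zm with he
  set A' : Zm → Set X := fun z => A z \ ⋃ (u : Zm) (_ : e u < e z), A u with hA'
  set B' : Zm → Set Y := fun z => B z \ ⋃ (u : Zm) (_ : e u < e z), B u with hB'
  have mA' : ∀ z, MeasurableSet (A' z) := fun z =>
    (mA z).diff (MeasurableSet.iUnion fun u => MeasurableSet.iUnion fun _ => mA u)
  have mB' : ∀ z, MeasurableSet (B' z) := fun z =>
    (mB z).diff (MeasurableSet.iUnion fun u => MeasurableSet.iUnion fun _ => mB u)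
  have hdiffA : ∀ z, μ (A z \ A' z) = 0 := by
    intro z
    have hsub : A z \ A' z ⊆ ⋃ u : Zm, {x | u ≠ z ∧ x ∈ A z ∩ A u} := by
      rintro x ⟨hxA, hxnA'⟩
      have hmem : x ∈ ⋃ (u : Zm) (_ : e u < e z), A u := by
        by_contra hc
        exact hxnA' ⟨hxA, hc⟩
      obtain ⟨u, hu2⟩ := Set.mem_iUnion.1 hmem
      obtain ⟨hu, hxu⟩ := Set.mem_iUnion.1 hu2
      have hune : u ≠ z := fun h => by rw [h] at hu; exact lt_irrefl _ hu
      exact Set.mem_iUnion.2 ⟨u, hune, hxA, hxu⟩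
    refine measure_mono_null hsub (measure_iUnion_null fun u => ?_)
    by_cases huz : u = z
    · have hemp : {x | u ≠ z ∧ x ∈ A z ∩ A u} = ∅ := by ext x; simp [huz]
      rw [hemp]; exact measure_empty
    · exact measure_mono_null (fun x hx => hx.2) (hAA z u (Ne.symm huz))
  have hdiffB : ∀ z, ν (B z \ B' z) = 0 := by
    intro z
    have hsub : B z \ B' z ⊆ ⋃ u : Zm, {y | u ≠ z ∧ y ∈ B z ∩ B u} := by
      rintro y ⟨hyB, hynB'⟩
      have hmem : y ∈ ⋃ (u : Zm) (_ : e u < e z), B u := by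
        by_contra hc
        exact hynB' ⟨hyB, hc⟩
      obtain ⟨u, hu2⟩ := Set.mem_iUnion.1 hmem
      obtain ⟨hu, hyu⟩ := Set.mem_iUnion.1 hu2
      have hune : u ≠ z := fun h => by rw [h] at hu; exact lt_irrefl _ hu
      exact Set.mem_iUnion.2 ⟨u, hune, hyB, hyu⟩
    refine measure_mono_null hsub (measure_iUnion_null fun u => ?_)
    by_cases huz : u = z
    · have hemp : {y | u ≠ z ∧ y ∈ B z ∩ B u} = ∅ := by ext y; simp [huz]
      rw [hemp]; exact measure_empty
    · exact measure_mono_null (fun y hy => hy.2) (hBB z u (Ne.symm huz))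
  have hAnull : ∀ z, μ (A z) = μ (A' z) := fun z =>
    measure_eq_of_diff_null Set.diff_subset (hdiffA z)
  have hBnull : ∀ z, ν (B z) = ν (B' z) := fun z =>
    measure_eq_of_diff_null Set.diff_subset (hdiffB z)
  have haeA : ∀ z, A' z =ᵐ[μ] A z := by
    intro z
    rw [MeasureTheory.ae_eq_set]
    refine ⟨?_, hdiffA z⟩
    rw [Set.diff_eq_empty.2 Set.diff_subset]; exact measure_empty
  have haeB : ∀ z, B' z =ᵐ[ν] B z := by
    intro z
    rw [MeasureTheory.ae_eq_set]
    refine ⟨?_, hdiffB z⟩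
    rw [Set.diff_eq_empty.2 Set.diff_subset]; exact measure_empty
  have hcoverA : ⋃ z, A' z = Set.univ := by
    ext x
    simp only [Set.mem_univ, iff_true, Set.mem_iUnion]
    obtain ⟨z0, hz0⟩ := exists_eq_ciInf_of_finite (f := fun u : Zm => c1 x ↑u + p0 u)
    have hz0' : x ∈ A z0 := hz0
    set T : Finset Zm := Finset.univ.filter (fun u : Zm => x ∈ A u) with hT
    have hTne : T.Nonempty := ⟨z0, by simp [hT, hz0']⟩
    obtain ⟨u0, hu0T, hmin⟩ := T.exists_min_image (fun u => e u) hTne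
    refine ⟨u0, ⟨(Finset.mem_filter.1 hu0T).2, ?_⟩⟩
    intro hmem
    obtain ⟨u, hu2⟩ := Set.mem_iUnion.1 hmem
    obtain ⟨hu, hxu⟩ := Set.mem_iUnion.1 hu2
    have huT : u ∈ T := by simp [hT, hxu]
    exact absurd hu (not_lt.2 (hmin u huT))
  have hcoverB : ⋃ z, B' z = Set.univ := by
    ext y
    simp only [Set.mem_univ, iff_true, Set.mem_iUnion]
    obtain ⟨z0, hz0⟩ := exists_eq_ciInf_of_finite (f := fun u : Zm => c2 ↑u y + (-p0) u)
    have hz0' : y ∈ B z0 := hz0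
    set T : Finset Zm := Finset.univ.filter (fun u : Zm => y ∈ B u) with hT
    have hTne : T.Nonempty := ⟨z0, by simp [hT, hz0']⟩
    obtain ⟨u0, hu0T, hmin⟩ := T.exists_min_image (fun u => e u) hTne
    refine ⟨u0, ⟨(Finset.mem_filter.1 hu0T).2, ?_⟩⟩
    intro hmem
    obtain ⟨u, hu2⟩ := Set.mem_iUnion.1 hmem
    obtain ⟨hu, hyu⟩ := Set.mem_iUnion.1 hu2
    have huT : u ∈ T := by simp [hT, hyu]
    exact absurd hu (not_lt.2 (hmin u huT))
  have hdisjA : ∀ z u : Zm, z ≠ u → Disjoint (A' z) (A' u) := by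
    intro z u hzu
    have hne : e z ≠ e u := fun h => hzu (e.injective h)
    rcases hne.lt_or_gt with h | h
    · refine Set.disjoint_left.2 fun x hxz hxu => ?_
      exact hxu.2 (Set.mem_iUnion.2 ⟨z, Set.mem_iUnion.2 ⟨h, hxz.1⟩⟩)
    · refine Set.disjoint_right.2 fun x hxu hxz => ?_
      exact hxz.2 (Set.mem_iUnion.2 ⟨u, Set.mem_iUnion.2 ⟨h, hxu.1⟩⟩)
  have hdisjB : ∀ z u : Zm, z ≠ u → Disjoint (B' z) (B' u) := by
    intro z u hzu
    have hne : e z ≠ e u := fun h => hzu (e.injective h)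
    rcases hne.lt_or_gt with h | h
    · refine Set.disjoint_left.2 fun y hyz hyu => ?_
      exact hyu.2 (Set.mem_iUnion.2 ⟨z, Set.mem_iUnion.2 ⟨h, hyz.1⟩⟩)
    · refine Set.disjoint_right.2 fun y hyu hyz => ?_
      exact hyz.2 (Set.mem_iUnion.2 ⟨u, Set.mem_iUnion.2 ⟨h, hyu.1⟩⟩)
  have hm' : ∀ z, ν (B' z) = μ (A' z) := fun z => by
    rw [← hBnull z, ← heq z, hAnull z]
  -- the coupling
  set π : Measure (X × Y) :=
    ∑ z : Zm, ((μ (A' z))⁻¹ • ((μ.restrict (A' z)).prod (ν.restrict (B' z)))) with hπ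
  have hUA : (⋃ z ∈ (Finset.univ : Finset Zm), A' z) = Set.univ := by
    rw [← hcoverA]; ext x; simp
  have hUB : (⋃ z ∈ (Finset.univ : Finset Zm), B' z) = Set.univ := by
    rw [← hcoverB]; ext y; simp
  have hπfst : π.map Prod.fst = μ := by
    ext s hs
    rw [Measure.map_apply measurable_fst hs, hπ, Measure.finset_sum_apply]
    have hpre : (Prod.fst ⁻¹' s : Set (X × Y)) = s ×ˢ Set.univ := by
      ext q; simp
    have hterm : ∀ z : Zm,
        ((μ (A' z))⁻¹ • ((μ.restrict (A' z)).prod (ν.restrict (B' z)))) (Prod.fst ⁻¹' s)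
          = μ (s ∩ A' z) := by
      intro z
      rw [Measure.smul_apply, hpre, Measure.prod_prod, Measure.restrict_apply hs,
        Measure.restrict_apply_univ, hm' z, smul_eq_mul]
      exact ennreal_helper1 (measure_ne_top μ _) (measure_mono Set.inter_subset_right)
    rw [Finset.sum_congr rfl fun z _ => hterm z]
    have hdp : Set.Pairwise ↑(Finset.univ : Finset Zm)
        (Function.onFun Disjoint fun z => s ∩ A' z) :=
      fun z _ u _ hzu => ((hdisjA z u hzu).mono Set.inter_subset_right Set.inter_subset_right)
    rw [← measure_biUnion_finset hdp fun z _ => hs.inter (mA' z)]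
    congr 1
    rw [← Set.inter_iUnion₂, hUA, Set.inter_univ]
  have hπsnd : π.map Prod.snd = ν := by
    ext s hs
    rw [Measure.map_apply measurable_snd hs, hπ, Measure.finset_sum_apply]
    have hpre : (Prod.snd ⁻¹' s : Set (X × Y)) = Set.univ ×ˢ s := by
      ext q; simp
    have hterm : ∀ z : Zm,
        ((μ (A' z))⁻¹ • ((μ.restrict (A' z)).prod (ν.restrict (B' z)))) (Prod.snd ⁻¹' s)
          = ν (s ∩ B' z) := by
      intro z
      rw [Measure.smul_apply, hpre, Measure.prod_prod, Measure.restrict_apply hs,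
        Measure.restrict_apply_univ, smul_eq_mul]
      refine ennreal_helper2 (measure_ne_top μ _) ?_
      calc ν (s ∩ B' z) ≤ ν (B' z) := measure_mono Set.inter_subset_right
        _ = μ (A' z) := hm' z
    rw [Finset.sum_congr rfl fun z _ => hterm z]
    have hdp : Set.Pairwise ↑(Finset.univ : Finset Zm)
        (Function.onFun Disjoint fun z => s ∩ B' z) :=
      fun z _ u _ hzu => ((hdisjB z u hzu).mono Set.inter_subset_right Set.inter_subset_right)
    rw [← measure_biUnion_finset hdp fun z _ => hs.inter (mB' z)]
    congr 1
    rw [← Set.inter_iUnion₂, hUB, Set.inter_univ]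
  have hπprob : IsProbabilityMeasure π := by
    constructor
    have h := congrArg (fun m : Measure X => m Set.univ) hπfst
    rw [Measure.map_apply measurable_fst MeasurableSet.univ, Set.preimage_univ] at h
    rw [h]; exact measure_univ
  -- cost functions
  set cnew : X × Y → ℝ := fun q => ⨅ u : Zm, (c1 q.1 (ζ u) + c2 (ζ u) q.2) with hcnew
  set cold : X × Y → ℝ := fun q => ⨅ u : Zm, (c1 q.1 u + c2 u q.2) with hcold
  have mnew : Measurable cnew := Measurable.iInf fun u =>
    ((hc1.comp (continuous_fst.prodMk continuous_const)).measurable).add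
      ((hc2.comp (continuous_const.prodMk continuous_snd)).measurable)
  have mold : Measurable cold := Measurable.iInf fun u =>
    ((hc1.comp (continuous_fst.prodMk continuous_const)).measurable).add
      ((hc2.comp (continuous_const.prodMk continuous_snd)).measurable)
  have bnew : ∀ q, |cnew q| ≤ M1 + M2 := fun q =>
    abs_ciInf_le _ _ fun u => (abs_add_le _ _).trans (add_le_add (hM1 _ _) (hM2 _ _))
  have bold : ∀ q, |cold q| ≤ M1 + M2 := fun q =>
    abs_ciInf_le _ _ fun u => (abs_add_le _ _).trans (add_le_add (hM1 _ _) (hM2 _ _))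
  -- cost of the coupling
  have mc1s : ∀ w : Z, Measurable fun q : X × Y => c1 q.1 w := fun w =>
    (hc1.comp (continuous_fst.prodMk continuous_const)).measurable
  have mc2s : ∀ w : Z, Measurable fun q : X × Y => c2 w q.2 := fun w =>
    (hc2.comp (continuous_const.prodMk continuous_snd)).measurable
  have intprod : ∀ z : Zm, Integrable cnew ((μ.restrict (A' z)).prod (ν.restrict (B' z))) :=
    fun z => integrable_of_bdd mnew.aestronglyMeasurable bnew
  have hπz_int : ∀ z : Zm,
      Integrable cnew ((μ (A' z))⁻¹ • ((μ.restrict (A' z)).prod (ν.restrict (B' z)))) := by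
    intro z
    by_cases hz : μ (A' z) = 0
    · rw [Measure.restrict_eq_zero.2 hz, Measure.zero_prod, smul_zero]
      exact integrable_zero_measure
    · exact (intprod z).smul_measure (ENNReal.inv_ne_top.2 hz)
  have hterm : ∀ z : Zm,
      ∫ q, cnew q ∂((μ (A' z))⁻¹ • ((μ.restrict (A' z)).prod (ν.restrict (B' z))))
        ≤ (∫ x in A z, c1 x (ζ z) ∂μ) + ∫ y in B z, c2 (ζ z) y ∂ν := by
    intro z
    by_cases hz : μ (A' z) = 0
    · have hAz : μ (A z) = 0 := (hAnull z).trans hz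
      have hBz : ν (B z) = 0 := (heq z) ▸ hAz
      rw [Measure.restrict_eq_zero.2 hz, Measure.zero_prod, smul_zero, integral_zero_measure,
        show μ.restrict (A z) = 0 from Measure.restrict_eq_zero.2 hAz,
        show ν.restrict (B z) = 0 from Measure.restrict_eq_zero.2 hBz,
        integral_zero_measure, integral_zero_measure, add_zero]
    · have hνB' : ν (B' z) = μ (A' z) := hm' z
      set r : ℝ := (μ (A' z)).toReal with hr
      have hr0 : r ≠ 0 := ENNReal.toReal_ne_zero.2 ⟨hz, measure_ne_top μ _⟩
      have hint1 : Integrable (fun q : X × Y => c1 q.1 (ζ z))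
          ((μ.restrict (A' z)).prod (ν.restrict (B' z))) :=
        integrable_of_bdd (mc1s (ζ z)).aestronglyMeasurable (fun q => hM1 _ _)
      have hint2 : Integrable (fun q : X × Y => c2 (ζ z) q.2)
          ((μ.restrict (A' z)).prod (ν.restrict (B' z))) :=
        integrable_of_bdd (mc2s (ζ z)).aestronglyMeasurable (fun q => hM2 _ _)
      have hmono : ∫ q, cnew q ∂((μ.restrict (A' z)).prod (ν.restrict (B' z)))
          ≤ ∫ q, (c1 q.1 (ζ z) + c2 (ζ z) q.2)
              ∂((μ.restrict (A' z)).prod (ν.restrict (B' z))) :=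
        integral_mono (intprod z) (hint1.add hint2) (fun q => ciInf_le (bdd_range _) z)
      have hsplit : ∫ q, (c1 q.1 (ζ z) + c2 (ζ z) q.2)
            ∂((μ.restrict (A' z)).prod (ν.restrict (B' z)))
          = r * (∫ x in A' z, c1 x (ζ z) ∂μ) + r * ∫ y in B' z, c2 (ζ z) y ∂ν := by
        rw [integral_add hint1 hint2, integral_fun_fst (f := fun x => c1 x (ζ z)),
          integral_fun_snd (f := fun y => c2 (ζ z) y), measureReal_restrict_apply_univ,
          measureReal_restrict_apply_univ, measureReal_def, measureReal_def, hνB', smul_eq_mul, smul_eq_mul]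
      rw [integral_smul_measure, ENNReal.toReal_inv, smul_eq_mul]
      have hrinv : (0:ℝ) ≤ r⁻¹ := inv_nonneg.2 ENNReal.toReal_nonneg
      calc r⁻¹ * ∫ q, cnew q ∂((μ.restrict (A' z)).prod (ν.restrict (B' z)))
          ≤ r⁻¹ * (r * (∫ x in A' z, c1 x (ζ z) ∂μ) + r * ∫ y in B' z, c2 (ζ z) y ∂ν) := by
            refine mul_le_mul_of_nonneg_left ?_ hrinv
            rw [← hsplit]; exact hmono
        _ = (∫ x in A' z, c1 x (ζ z) ∂μ) + ∫ y in B' z, c2 (ζ z) y ∂ν := by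
            field_simp
        _ = (∫ x in A z, c1 x (ζ z) ∂μ) + ∫ y in B z, c2 (ζ z) y ∂ν := by
            rw [setIntegral_congr_set (haeA z), setIntegral_congr_set (haeB z)]
  have hcancel : ∀ z : Zm, (μ (A z)).toReal = (ν (B z)).toReal := fun z => by rw [heq z]
  have hsplitA : ∀ z : Zm,
      ∫ x in A z, c1 x ↑z ∂μ = (∫ x in A z, ξ1 x ∂μ) - p0 z * (μ (A z)).toReal := by
    intro z
    have hEq : Set.EqOn (fun x => c1 x ↑z) (fun x => ξ1 x - p0 z) (A z) := by
      intro x hx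
      have hx' : c1 x ↑z + p0 z = ξ1 x := hx
      simp only
      linarith
    rw [setIntegral_congr_fun (mA z) hEq,
      integral_sub intξ1.integrableOn (integrableOn_const (measure_ne_top μ _)),
      setIntegral_const, smul_eq_mul, mul_comm, measureReal_def]
  have hsplitB : ∀ z : Zm,
      ∫ y in B z, c2 ↑z y ∂ν = (∫ y in B z, ξ2 y ∂ν) + p0 z * (ν (B z)).toReal := by
    intro z
    have hEq : Set.EqOn (fun y => c2 ↑z y) (fun y => ξ2 y + p0 z) (B z) := by
      intro y hy
      have hy' : c2 ↑z y + (-p0) z = ξ2 y := hy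
      rw [hnegp] at hy'
      simp only
      linarith
    rw [setIntegral_congr_fun (mB z) hEq,
      integral_add intξ2.integrableOn (integrableOn_const (measure_ne_top ν _)),
      setIntegral_const, smul_eq_mul, mul_comm, measureReal_def]
  have hper : ∀ z : Zm,
      (∫ x in A z, c1 x ↑z ∂μ) + ∫ y in B z, c2 ↑z y ∂ν
        = (∫ x in A z, ξ1 x ∂μ) + ∫ y in B z, ξ2 y ∂ν := by
    intro z
    rw [hsplitA z, hsplitB z, hcancel z]
    ring
  have hpartA : ∑ z : Zm, ∫ x in A z, ξ1 x ∂μ = ∫ x, ξ1 x ∂μ := by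
    rw [Finset.sum_congr rfl fun z _ => (setIntegral_congr_set (haeA z)).symm,
      ← integral_biUnion_finset Finset.univ (fun z _ => mA' z)
        (fun z _ u _ h => hdisjA z u h) (fun z _ => intξ1.integrableOn), hUA,
      setIntegral_univ]
  have hpartB : ∑ z : Zm, ∫ y in B z, ξ2 y ∂ν = ∫ y, ξ2 y ∂ν := by
    rw [Finset.sum_congr rfl fun z _ => (setIntegral_congr_set (haeB z)).symm,
      ← integral_biUnion_finset Finset.univ (fun z _ => mB' z)
        (fun z _ u _ h => hdisjB z u h) (fun z _ => intξ2.integrableOn), hUB,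
      setIntegral_univ]
  have hcost : ∫ q, cnew q ∂π ≤ (∫ x, ξ1 x ∂μ) + ∫ y, ξ2 y ∂ν := by
    rw [hπ, integral_finset_sum_measure fun z _ => hπz_int z]
    calc ∑ z : Zm, ∫ q, cnew q ∂((μ (A' z))⁻¹ • ((μ.restrict (A' z)).prod (ν.restrict (B' z))))
        ≤ ∑ z : Zm, ((∫ x in A z, c1 x (ζ z) ∂μ) + ∫ y in B z, c2 (ζ z) y ∂ν) :=
          Finset.sum_le_sum fun z _ => hterm z
      _ ≤ ∑ z : Zm, ((∫ x in A z, c1 x ↑z ∂μ) + ∫ y in B z, c2 ↑z y ∂ν) :=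
          Finset.sum_le_sum fun z _ => hζ z ↑z
      _ = ∑ z : Zm, ((∫ x in A z, ξ1 x ∂μ) + ∫ y in B z, ξ2 y ∂ν) :=
          Finset.sum_congr rfl fun z _ => hper z
      _ = (∫ x, ξ1 x ∂μ) + ∫ y, ξ2 y ∂ν := by
          rw [Finset.sum_add_distrib, hpartA, hpartB]
  -- weak duality
  have hlow : ∀ t ∈ {t : ℝ | ∃ π' : Measure (X × Y), IsProbabilityMeasure π' ∧
      π'.map Prod.fst = μ ∧ π'.map Prod.snd = ν ∧ t = ∫ q, cold q ∂π'},
      (∫ x, ξ1 x ∂μ) + ∫ y, ξ2 y ∂ν ≤ t := by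
    rintro t ⟨π', hπ', h1, h2, rfl⟩
    haveI := hπ'
    have i1 : Integrable (fun q : X × Y => ξ1 q.1) π' :=
      integrable_of_bdd (mξ1.comp measurable_fst).aestronglyMeasurable (fun q => bξ1 q.1)
    have i2 : Integrable (fun q : X × Y => ξ2 q.2) π' :=
      integrable_of_bdd (mξ2.comp measurable_snd).aestronglyMeasurable (fun q => bξ2 q.2)
    have iold : Integrable cold π' := integrable_of_bdd mold.aestronglyMeasurable bold
    have e1 : ∫ x, ξ1 x ∂μ = ∫ q : X × Y, ξ1 q.1 ∂π' := by
      rw [← h1, integral_map measurable_fst.aemeasurable mξ1.aestronglyMeasurable]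
    have e2 : ∫ y, ξ2 y ∂ν = ∫ q : X × Y, ξ2 q.2 ∂π' := by
      rw [← h2, integral_map measurable_snd.aemeasurable mξ2.aestronglyMeasurable]
    have hpt : ∀ q : X × Y, ξ1 q.1 + ξ2 q.2 ≤ cold q := by
      intro q
      refine le_ciInf fun u => ?_
      have t1 : ξ1 q.1 ≤ c1 q.1 ↑u + p0 u := ciInf_le (bdd_range _) u
      have t2 : ξ2 q.2 ≤ c2 ↑u q.2 + (-p0) u := ciInf_le (bdd_range _) u
      rw [hnegp] at t2
      linarith
    calc (∫ x, ξ1 x ∂μ) + ∫ y, ξ2 y ∂ν = ∫ q : X × Y, (ξ1 q.1 + ξ2 q.2) ∂π' := by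
          rw [e1, e2, ← integral_add i1 i2]
      _ ≤ ∫ q, cold q ∂π' := integral_mono (i1.add i2) iold hpt
  -- final assembly
  have hmem_new : (∫ q, cnew q ∂π) ∈ {t : ℝ | ∃ π' : Measure (X × Y), IsProbabilityMeasure π' ∧
      π'.map Prod.fst = μ ∧ π'.map Prod.snd = ν ∧ t = ∫ q, cnew q ∂π'} :=
    ⟨π, hπprob, hπfst, hπsnd, rfl⟩
  have hmem_old : (∫ q, cold q ∂π) ∈ {t : ℝ | ∃ π' : Measure (X × Y), IsProbabilityMeasure π' ∧
      π'.map Prod.fst = μ ∧ π'.map Prod.snd = ν ∧ t = ∫ q, cold q ∂π'} :=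
    ⟨π, hπprob, hπfst, hπsnd, rfl⟩
  have hbdd : BddBelow {t : ℝ | ∃ π' : Measure (X × Y), IsProbabilityMeasure π' ∧
      π'.map Prod.fst = μ ∧ π'.map Prod.snd = ν ∧ t = ∫ q, cnew q ∂π'} := by
    refine ⟨-(M1 + M2), ?_⟩
    rintro t ⟨π', hπ', h1, h2, rfl⟩
    haveI := hπ'
    have hint : Integrable cnew π' := integrable_of_bdd mnew.aestronglyMeasurable bnew
    have := integral_mono (integrable_const (-(M1 + M2))) hint
      (fun q => neg_le_of_abs_le (bnew q))
    simpa using this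
  have h1 : kant μ ν (fun x y => ⨅ z : Zm, (c1 x (ζ z) + c2 (ζ z) y)) ≤ ∫ q, cnew q ∂π := by
    unfold kant
    exact csInf_le hbdd hmem_new
  have h2 : (∫ x, ξ1 x ∂μ) + ∫ y, ξ2 y ∂ν
      ≤ kant μ ν (fun x y => ⨅ z : Zm, (c1 x z + c2 z y)) := by
    unfold kant
    exact le_csInf ⟨_, hmem_old⟩ hlow
  linarith
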